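/- Let Θ be a measurable space, μ a probability measure on Θ, k : Θ → ℝ a bounded nonnegative measurable function with Z := ∫ k dμ > 0, and α ∈ (0,1). Define the Newton update μ' := (1−α)·μ + α·μ.withDensity(θ ↦ k(θ)/Z). Then (i) μ' is a probability measure, and (ii) for every bounded measurable φ : Θ → ℝ, ∫ φ dμ' = ∫ φ dμ − α·∫ φ(θ)·( V(θ) − ∫ V dμ ) dμ(θ), where V(θ) := −k(θ)/Z. That is, Newton's recursion is exactly the forward Euler step with step size α for the Fisher–Rao gradient flow ∂_t μ_t = −μ_t·( V − ∫ V dμ_t ) of the functional F(μ) = −log ∫ k dμ, whose first variation at μ is V. -/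
import Mathlib


open MeasureTheory Real

lemma integrable_of_bdd' {Θ : Type*} [MeasurableSpace Θ] (ν : Measure Θ) [IsFiniteMeasure ν]
    (φ : Θ → ℝ) (hφ : Measurable φ) (D : ℝ) (h : ∀ θ, |φ θ| ≤ D) : Integrable φ ν :=
  (integrable_const D).mono' hφ.aestronglyMeasurable (ae_of_all _ fun θ => by simpa using h θ)

/-- Newton's recursion `μ' = (1-α)μ + α·(k/Z)μ` (with `Z = ∫ k dμ`) is a probability
measure, and it is exactly the forward Euler step of size `α` for the Fisher–Rao
gradient flow of `F(μ) = -log ∫ k dμ`, whose first variation is `V = -k/Z`: for every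
bounded measurable test function `φ`,
`∫ φ dμ' = ∫ φ dμ - α ∫ φ(θ)(V(θ) - ∫ V dμ) dμ(θ)`. -/
theorem newton_recursion_is_fisher_rao_euler_step
    {Θ : Type*} [MeasurableSpace Θ] (μ : Measure Θ) [IsProbabilityMeasure μ]
    (k : Θ → ℝ) (hk_meas : Measurable k) (hk_nonneg : ∀ θ, 0 ≤ k θ)
    (C : ℝ) (hk_bdd : ∀ θ, k θ ≤ C)
    (Z : ℝ) (hZ : Z = ∫ θ, k θ ∂μ) (hZpos : 0 < Z)
    (α : ℝ) (hα : α ∈ Set.Ioo (0 : ℝ) 1)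
    (μ' : Measure Θ)
    (hμ' : μ' = ENNReal.ofReal (1 - α) • μ
        + ENNReal.ofReal α • μ.withDensity (fun θ => ENNReal.ofReal (k θ / Z)))
    (V : Θ → ℝ) (hV : V = fun θ => -(k θ) / Z) :
    IsProbabilityMeasure μ' ∧
      ∀ φ : Θ → ℝ, Measurable φ → (∃ Cφ : ℝ, ∀ θ, |φ θ| ≤ Cφ) →
        ∫ θ, φ θ ∂μ' = (∫ θ, φ θ ∂μ)
          - α * ∫ θ, φ θ * (V θ - ∫ θ', V θ' ∂μ) ∂μ := by
  obtain ⟨hα0, hα1⟩ := hα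
  set ν := μ.withDensity (fun θ => ENNReal.ofReal (k θ / Z)) with hνdef
  have hkabs : ∀ θ, |k θ| ≤ C := fun θ =>
    abs_le.2 ⟨by linarith [hk_nonneg θ, hk_bdd θ], hk_bdd θ⟩
  have hkint : Integrable k μ := integrable_of_bdd' μ k hk_meas C hkabs
  have hν : IsProbabilityMeasure ν := by
    constructor
    rw [hνdef, withDensity_apply _ MeasurableSet.univ, setLIntegral_univ,
      ← ofReal_integral_eq_lintegral_ofReal (hkint.div_const Z)
        (ae_of_all _ fun θ => div_nonneg (hk_nonneg θ) hZpos.le),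
      integral_div, ← hZ, div_self hZpos.ne', ENNReal.ofReal_one]
  have hprob : IsProbabilityMeasure μ' := by
    constructor
    rw [hμ', Measure.add_apply, Measure.smul_apply, Measure.smul_apply,
      measure_univ, hν.measure_univ, smul_eq_mul, smul_eq_mul, mul_one, mul_one,
      ← ENNReal.ofReal_add (by linarith) hα0.le]
    norm_num
  refine ⟨hprob, fun φ hφ ⟨Cφ, hCφ⟩ => ?_⟩
  -- ∫ V dμ = -1
  have hVint : (∫ θ', V θ' ∂μ) = -1 := by
    rw [hV]
    simp only [neg_div]
    rw [integral_neg, integral_div, ← hZ, div_self hZpos.ne']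
  -- integrabilities
  have hφμ : Integrable φ μ := integrable_of_bdd' μ φ hφ Cφ hCφ
  have hφν : Integrable φ ν := integrable_of_bdd' ν φ hφ Cφ hCφ
  have hφk : Integrable (fun θ => φ θ * (k θ / Z)) μ := by
    refine integrable_of_bdd' μ _ (hφ.mul (hk_meas.div_const Z)) (Cφ * (C / Z)) fun θ => ?_
    rw [abs_mul, abs_div, abs_of_pos hZpos, abs_of_nonneg (hk_nonneg θ)]
    have hCφ0 : 0 ≤ Cφ := (abs_nonneg _).trans (hCφ θ)
    have h1 : k θ / Z ≤ C / Z := by gcongr; exact hk_bdd θ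
    exact mul_le_mul (hCφ θ) h1 (div_nonneg (hk_nonneg θ) hZpos.le) hCφ0
  -- integral against ν
  have hνint : ∫ θ, φ θ ∂ν = ∫ θ, φ θ * (k θ / Z) ∂μ := by
    have hg : Measurable (fun θ => (k θ / Z).toNNReal) := (hk_meas.div_const Z).real_toNNReal
    have : ν = μ.withDensity (fun θ => ((k θ / Z).toNNReal : ENNReal)) := rfl
    rw [this, integral_withDensity_eq_integral_smul hg]
    refine integral_congr_ae (ae_of_all _ fun θ => ?_)
    show (k θ / Z).toNNReal • φ θ = φ θ * (k θ / Z)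
    rw [NNReal.smul_def, Real.coe_toNNReal _ (div_nonneg (hk_nonneg θ) hZpos.le), smul_eq_mul, mul_comm]
  -- LHS
  have hLHS : ∫ θ, φ θ ∂μ' = (1 - α) * ∫ θ, φ θ ∂μ + α * ∫ θ, φ θ * (k θ / Z) ∂μ := by
    rw [hμ', integral_add_measure
        (hφμ.smul_measure ENNReal.ofReal_ne_top)
        (hφν.smul_measure ENNReal.ofReal_ne_top),
      integral_smul_measure, integral_smul_measure,
      ENNReal.toReal_ofReal (by linarith), ENNReal.toReal_ofReal hα0.le,
      smul_eq_mul, smul_eq_mul, hνint]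
  -- RHS inner integral
  have hRHS : ∫ θ, φ θ * (V θ - ∫ θ', V θ' ∂μ) ∂μ
      = (∫ θ, φ θ ∂μ) - ∫ θ, φ θ * (k θ / Z) ∂μ := by
    rw [hVint]
    have : ∀ θ, φ θ * (V θ - (-1)) = φ θ - φ θ * (k θ / Z) := by
      intro θ
      rw [hV]
      field_simp
      ring
    rw [integral_congr_ae (ae_of_all _ this), integral_sub hφμ hφk]
  rw [hLHS, hRHS]
  ring
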